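/- Let F be a finite field with q elements, let m ≥ 1, n ≥ 2, let 1 ≤ t ≤ n, and let ẽ ∈ F^n have Hamming weight t. Then Σ_{H ∈ F^{m×n}, H·ẽ = 0} (number of projective equivalence classes of {e ∈ ker(H) : wt(e) = t}) = q^{m(n−1)} + (C(n,t)·(q−1)^{t−1} − 1)·q^{m(n−2)}. Equivalently, for H uniform among the q^{m(n−1)} matrices with H·ẽ = 0, the expected number of collinearity classes of weight-t kernel vectors equals 1 + (C(n,t)·(q−1)^{t−1} − 1)/q^m. -/

import Mathlib

open Finset Module Matrix

set_option linter.unusedSectionVars false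

section Aux

variable {F : Type} [Field F] [Fintype F] [DecidableEq F] {m n t : ℕ}

lemma card_fiber_zero {M N : Type} [AddCommGroup M] [Module F M] [Fintype M]
    [AddCommGroup N] [Module F N] [Fintype N]
    (f : M →ₗ[F] N) (hf : Function.Surjective f) :
    Nat.card {x : M // f x = 0} = Fintype.card F ^ (finrank F M - finrank F N) := by
  have h1 : Nat.card {x : M // f x = 0} = Nat.card ↥(LinearMap.ker f) := by
    refine Nat.card_congr (Equiv.subtypeEquivRight ?_)
    intro x; exact (LinearMap.mem_ker).symm
  haveI : Fintype ↥(LinearMap.ker f) := Fintype.ofFinite _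
  have h2 : Nat.card ↥(LinearMap.ker f) = Fintype.card F ^ finrank F ↥(LinearMap.ker f) := by
    rw [Nat.card_eq_fintype_card]
    exact card_eq_pow_finrank (K := F)
  have h3 : finrank F ↥(LinearMap.range f) + finrank F ↥(LinearMap.ker f) = finrank F M :=
    LinearMap.finrank_range_add_finrank_ker f
  have h4 : LinearMap.range f = ⊤ := LinearMap.range_eq_top.mpr hf
  rw [h4, finrank_top] at h3
  rw [h1, h2]
  congr 1
  omega

lemma dot_single_fun (ℓ : (Fin n → F) →ₗ[F] F) (x : Fin n → F) :
    (fun j => ℓ (Pi.single j 1)) ⬝ᵥ x = ℓ x := by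
  have hx : x = ∑ j, Pi.single j (x j) := by
    rw [Finset.univ_sum_single]
  conv_rhs => rw [hx]
  rw [map_sum, dotProduct]
  refine Finset.sum_congr rfl fun j _ => ?_
  have : Pi.single j (x j) = x j • (Pi.single j (1 : F) : Fin n → F) := by
    funext i
    by_cases h : i = j <;> simp [Pi.single_apply, h, mul_comm]
  rw [this, ℓ.map_smul, smul_eq_mul, mul_comm]

lemma exists_dual_single (v : Fin n → F) (hv : v ≠ 0) :
    ∃ r : Fin n → F, r ⬝ᵥ v = 1 := by
  obtain ⟨j, hj⟩ : ∃ j, v j ≠ 0 := by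
    by_contra h; push_neg at h; exact hv (funext fun j => h j)
  refine ⟨Pi.single j (v j)⁻¹, ?_⟩
  simp [dotProduct, Pi.single_apply, Finset.sum_ite_eq', inv_mul_cancel₀ hj]

lemma exists_dual_pair (v w : Fin n → F)
    (hindep : ∀ a b : F, a • v + b • w = 0 → a = 0 ∧ b = 0) :
    ∃ r s : Fin n → F, r ⬝ᵥ v = 1 ∧ r ⬝ᵥ w = 0 ∧ s ⬝ᵥ v = 0 ∧ s ⬝ᵥ w = 1 := by
  set ψ : (Fin 2 → F) →ₗ[F] (Fin n → F) :=
    { toFun := fun c => c 0 • v + c 1 • w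
      map_add' := fun a b => by simp [add_smul]; abel
      map_smul' := fun c a => by simp [mul_smul, smul_add] }
  have hinj : Function.Injective ψ := by
    rw [← LinearMap.ker_eq_bot, LinearMap.ker_eq_bot']
    intro c hc
    obtain ⟨h0, h1⟩ := hindep (c 0) (c 1) hc
    funext i; fin_cases i <;> simp [h0, h1]
  have hsurj := LinearMap.dualMap_surjective_of_injective hinj
  obtain ⟨ℓ₀, hℓ₀⟩ := hsurj (LinearMap.proj 0)
  obtain ⟨ℓ₁, hℓ₁⟩ := hsurj (LinearMap.proj 1)
  have hv : v = ψ (Pi.single 0 1) := by simp [ψ]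
  have hw : w = ψ (Pi.single 1 1) := by simp [ψ]
  refine ⟨fun j => ℓ₀ (Pi.single j 1), fun j => ℓ₁ (Pi.single j 1), ?_, ?_, ?_, ?_⟩ <;>
    rw [dot_single_fun]
  · rw [hv, ← LinearMap.dualMap_apply, hℓ₀]; simp
  · rw [hw, ← LinearMap.dualMap_apply, hℓ₀]; simp
  · rw [hv, ← LinearMap.dualMap_apply, hℓ₁]; simp
  · rw [hw, ← LinearMap.dualMap_apply, hℓ₁]; simp

lemma card_matrix_single (v : Fin n → F) (hv : v ≠ 0) :
    (univ.filter (fun H : Matrix (Fin m) (Fin n) F => H.mulVec v = 0)).card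
      = Fintype.card F ^ (m * (n - 1)) := by
  set φ : Matrix (Fin m) (Fin n) F →ₗ[F] (Fin m → F) :=
    { toFun := fun H => H.mulVec v
      map_add' := fun A B => Matrix.add_mulVec A B v
      map_smul' := fun c A => Matrix.smul_mulVec c A v }
  obtain ⟨r, hr⟩ := exists_dual_single v hv
  have hsurj : Function.Surjective φ := by
    intro a
    refine ⟨Matrix.of (fun i j => a i * r j), ?_⟩
    funext i
    simp only [φ, LinearMap.coe_mk, AddHom.coe_mk, Matrix.mulVec, dotProduct,
      Matrix.of_apply]
    simp_rw [mul_assoc, ← Finset.mul_sum]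
    rw [show ∑ j, r j * v j = r ⬝ᵥ v from rfl, hr, mul_one]
  have := card_fiber_zero φ hsurj
  rw [Nat.card_eq_fintype_card, Fintype.card_subtype] at this
  have hset : (univ.filter (fun H : Matrix (Fin m) (Fin n) F => H.mulVec v = 0))
      = (univ.filter (fun x => φ x = 0)) := by
    ext H; simp [φ]
  rw [hset, this]
  congr 1
  simp only [finrank_matrix, finrank_fintype_fun_eq_card, Fintype.card_fin, finrank_self,
    mul_one]
  have := Nat.mul_sub m n 1
  omega

lemma card_matrix_pair (v w : Fin n → F)
    (hindep : ∀ a b : F, a • v + b • w = 0 → a = 0 ∧ b = 0) :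
    (univ.filter (fun H : Matrix (Fin m) (Fin n) F => H.mulVec v = 0 ∧ H.mulVec w = 0)).card
      = Fintype.card F ^ (m * (n - 2)) := by
  set φ : Matrix (Fin m) (Fin n) F →ₗ[F] (Fin m → F) × (Fin m → F) :=
    { toFun := fun H => (H.mulVec v, H.mulVec w)
      map_add' := fun A B => by simp [Matrix.add_mulVec, Prod.ext_iff]
      map_smul' := fun c A => by simp [Matrix.smul_mulVec, Prod.ext_iff] }
  obtain ⟨r, s, hrv, hrw, hsv, hsw⟩ := exists_dual_pair v w hindep
  have hsurj : Function.Surjective φ := by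
    rintro ⟨a, b⟩
    refine ⟨Matrix.of (fun i j => a i * r j + b i * s j), ?_⟩
    have key : ∀ (u : Fin n → F), (Matrix.of (fun i j => a i * r j + b i * s j)).mulVec u
        = fun i => a i * (r ⬝ᵥ u) + b i * (s ⬝ᵥ u) := by
      intro u
      funext i
      simp only [Matrix.mulVec, dotProduct, Matrix.of_apply]
      simp_rw [add_mul, Finset.sum_add_distrib, mul_assoc, ← Finset.mul_sum]
    simp only [φ, LinearMap.coe_mk, AddHom.coe_mk, key, hrv, hrw, hsv, hsw, Prod.mk.injEq]
    constructor <;> (funext i; simp)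
  have := card_fiber_zero φ hsurj
  rw [Nat.card_eq_fintype_card, Fintype.card_subtype] at this
  have hset : (univ.filter (fun H : Matrix (Fin m) (Fin n) F => H.mulVec v = 0 ∧ H.mulVec w = 0))
      = (univ.filter (fun x => φ x = 0)) := by
    ext H; simp [φ, Prod.ext_iff]
  rw [hset, this]
  congr 1
  simp only [finrank_matrix, finrank_prod, finrank_fintype_fun_eq_card, Fintype.card_fin,
    finrank_self, mul_one]
  have := Nat.mul_sub m n 2
  omega

lemma orbit_eq_iff (e e' : Fin n → F) :
    {x : Fin n → F | ∃ α : F, α ≠ 0 ∧ x = α • e'} = {x : Fin n → F | ∃ α : F, α ≠ 0 ∧ x = α • e}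
      ↔ ∃ α : F, α ≠ 0 ∧ e' = α • e := by
  constructor
  · intro h
    have : e' ∈ {x : Fin n → F | ∃ α : F, α ≠ 0 ∧ x = α • e'} :=
      ⟨1, one_ne_zero, (one_smul F e').symm⟩
    rw [h] at this
    exact this
  · rintro ⟨α, hα, rfl⟩
    ext x
    constructor
    · rintro ⟨β, hβ, rfl⟩
      exact ⟨β * α, mul_ne_zero hβ hα, (mul_smul β α e).symm⟩
    · rintro ⟨γ, hγ, rfl⟩
      exact ⟨γ * α⁻¹, mul_ne_zero hγ (inv_ne_zero hα), by
        rw [← mul_smul, mul_assoc, inv_mul_cancel₀ hα, mul_one]⟩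

lemma orbit_card (e : Fin n → F) (he : e ≠ 0) :
    (univ.filter (fun x : Fin n → F => ∃ α : F, α ≠ 0 ∧ x = α • e)).card
      = Fintype.card F - 1 := by
  have himg : (univ.filter (fun x : Fin n → F => ∃ α : F, α ≠ 0 ∧ x = α • e))
      = (univ.filter (fun α : F => α ≠ 0)).image (· • e) := by
    ext x
    simp only [mem_filter, mem_univ, true_and, mem_image]
    constructor
    · rintro ⟨α, hα, rfl⟩; exact ⟨α, hα, rfl⟩
    · rintro ⟨α, hα, rfl⟩; exact ⟨α, hα, rfl⟩
  obtain ⟨i, hi⟩ : ∃ i, e i ≠ 0 := by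
    by_contra h; push_neg at h; exact he (funext fun i => h i)
  rw [himg, Finset.card_image_of_injOn, Finset.filter_ne', Finset.card_erase_of_mem (mem_univ 0),
    Finset.card_univ]
  intro α _ β _ hab
  have := congrFun hab i
  simpa [hi] using mul_right_cancel₀ hi this

lemma weight_smul_eq (e : Fin n → F) (α : F) (hα : α ≠ 0) :
    (univ.filter (fun i => (α • e) i ≠ 0)) = (univ.filter (fun i => e i ≠ 0)) := by
  ext i
  simp [Pi.smul_apply, smul_eq_mul, hα]

lemma weight_pos_ne_zero (e : Fin n → F) (ht1 : 1 ≤ t)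
    (he : (univ.filter (fun i => e i ≠ 0)).card = t) : e ≠ 0 := by
  intro h
  subst h
  simp only [Pi.zero_apply, ne_eq, not_true_eq_false] at he
  simp at he
  omega

lemma classes_count (H : Matrix (Fin m) (Fin n) F) (ht1 : 1 ≤ t) :
    Set.ncard {O : Set (Fin n → F) |
        ∃ e : Fin n → F, H.mulVec e = 0 ∧
          (Finset.univ.filter (fun i => e i ≠ 0)).card = t ∧
          O = {x : Fin n → F | ∃ α : F, α ≠ 0 ∧ x = α • e}}
      * (Fintype.card F - 1)
    = (univ.filter (fun e : Fin n → F => H.mulVec e = 0 ∧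
        (univ.filter (fun i => e i ≠ 0)).card = t)).card := by
  classical
  set s := univ.filter (fun e : Fin n → F => H.mulVec e = 0 ∧
      (univ.filter (fun i => e i ≠ 0)).card = t) with hs
  set Oset : (Fin n → F) → Set (Fin n → F) :=
    fun e => {x : Fin n → F | ∃ α : F, α ≠ 0 ∧ x = α • e} with hOset
  have hS : {O : Set (Fin n → F) |
        ∃ e : Fin n → F, H.mulVec e = 0 ∧
          (Finset.univ.filter (fun i => e i ≠ 0)).card = t ∧
          O = {x : Fin n → F | ∃ α : F, α ≠ 0 ∧ x = α • e}}
      = ↑(s.image Oset) := by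
    ext O
    simp only [Set.mem_setOf_eq, Finset.coe_image, Set.mem_image, Finset.mem_coe, hs,
      mem_filter, mem_univ, true_and]
    constructor
    · rintro ⟨e, h1, h2, rfl⟩; exact ⟨e, ⟨h1, h2⟩, rfl⟩
    · rintro ⟨e, ⟨h1, h2⟩, rfl⟩; exact ⟨e, h1, h2, rfl⟩
  rw [hS, Set.ncard_coe_finset]
  have hcard := Finset.card_eq_sum_card_image Oset s
  rw [hcard, Finset.sum_congr rfl (fun O hO => ?_), Finset.sum_const, smul_eq_mul, mul_comm]
  -- show each fiber has card q - 1
  obtain ⟨e, hes, rfl⟩ := Finset.mem_image.mp hO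
  have he0 : e ≠ 0 := by
    rw [hs, mem_filter] at hes
    exact weight_pos_ne_zero e ht1 hes.2.2
  have hfib : s.filter (fun e' => Oset e' = Oset e)
      = univ.filter (fun x : Fin n → F => ∃ α : F, α ≠ 0 ∧ x = α • e) := by
    ext e'
    simp only [mem_filter, mem_univ, true_and, hs]
    constructor
    · rintro ⟨-, horb⟩
      exact (orbit_eq_iff e e').mp horb
    · rintro ⟨α, hα, rfl⟩
      rw [hs, mem_filter] at hes
      refine ⟨⟨?_, ?_⟩, (orbit_eq_iff e (α • e)).mpr ⟨α, hα, rfl⟩⟩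
      · rw [Matrix.mulVec_smul, hes.2.1, smul_zero]
      · rw [weight_smul_eq e α hα]; exact hes.2.2
  rw [hfib, orbit_card e he0]

lemma card_support_eq (s : Finset (Fin n)) :
    (univ.filter (fun e : Fin n → F => univ.filter (fun i => e i ≠ 0) = s)).card
      = (Fintype.card F - 1) ^ s.card := by
  classical
  have : (univ.filter (fun e : Fin n → F => univ.filter (fun i => e i ≠ 0) = s)).card
      = Fintype.card {e : Fin n → F // univ.filter (fun i => e i ≠ 0) = s} := by
    rw [Fintype.card_subtype]
  rw [this]
  have e : {e : Fin n → F // univ.filter (fun i => e i ≠ 0) = s}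
      ≃ (∀ _ : {i // i ∈ s}, {x : F // x ≠ 0}) :=
    { toFun := fun e i => ⟨e.1 i.1, by
        have := e.2
        have hi : (i : Fin n) ∈ univ.filter (fun j => e.1 j ≠ 0) := by rw [this]; exact i.2
        exact (mem_filter.mp hi).2⟩
      invFun := fun g => ⟨fun i => if h : i ∈ s then (g ⟨i, h⟩).1 else 0, by
        ext i
        simp only [mem_filter, mem_univ, true_and]
        by_cases h : i ∈ s
        · simp [h, (g ⟨i, h⟩).2]
        · simp [h]⟩
      left_inv := fun e => by
        ext i
        by_cases h : i ∈ s
        · simp [h]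
        · simp only [h, dif_neg, not_false_iff]
          have : i ∉ univ.filter (fun j => e.1 j ≠ 0) := by rw [e.2]; exact h
          have h0 : e.1 i = 0 := by simpa using this
          exact h0.symm
      right_inv := fun g => by
        ext i
        simp [i.2] }
  rw [Fintype.card_congr e, Fintype.card_pi]
  have hcard : Fintype.card {x : F // x ≠ 0} = Fintype.card F - 1 := by
    simp [Fintype.card_subtype_compl]
  simp only [hcard, Finset.prod_const]
  congr 1
  simp [Fintype.card_coe]

lemma card_weight_sphere :
    (univ.filter (fun e : Fin n → F => (univ.filter (fun i => e i ≠ 0)).card = t)).card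
      = n.choose t * (Fintype.card F - 1) ^ t := by
  classical
  rw [Finset.card_eq_sum_card_fiberwise
    (f := fun e : Fin n → F => univ.filter (fun i => e i ≠ 0))
    (t := Finset.powersetCard t univ)
    (fun e he => by
      rw [Finset.mem_coe, Finset.mem_powersetCard_univ]
      exact (mem_filter.mp he).2)]
  have hstep : ∀ s ∈ Finset.powersetCard t (univ : Finset (Fin n)),
      ((univ.filter (fun e : Fin n → F => (univ.filter (fun i => e i ≠ 0)).card = t)).filter
        (fun e => univ.filter (fun i => e i ≠ 0) = s)).card
      = (Fintype.card F - 1) ^ t := by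
    intro s hsmem
    have hst : s.card = t := Finset.mem_powersetCard_univ.mp hsmem
    have : ((univ.filter (fun e : Fin n → F => (univ.filter (fun i => e i ≠ 0)).card = t)).filter
        (fun e => univ.filter (fun i => e i ≠ 0) = s))
        = univ.filter (fun e : Fin n → F => univ.filter (fun i => e i ≠ 0) = s) := by
      ext e
      simp only [mem_filter, mem_univ, true_and]
      constructor
      · rintro ⟨-, h⟩; exact h
      · intro h; exact ⟨by rw [h, hst], h⟩
    rw [this, card_support_eq, hst]
  rw [Finset.sum_congr rfl hstep, Finset.sum_const, smul_eq_mul,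
    Finset.card_powersetCard, Finset.card_univ, Fintype.card_fin]

lemma arith_final (a b k X W2 : ℕ) (hX : 1 ≤ X) (hsplit : k + W2 = X * k) :
    k * a + W2 * b = (a + (X - 1) * b) * k := by
  obtain ⟨X', rfl⟩ : ∃ X', X = X' + 1 := ⟨X - 1, by omega⟩
  have h : W2 = X' * k := by
    have : (X' + 1) * k = X' * k + k := by ring
    omega
  subst h
  rw [Nat.add_sub_cancel]
  ring

end Aux

set_option maxHeartbeats 1000000 in
/-- For a fixed vector `ẽ` of Hamming weight `t`, summing over the matrices `H`
with `H·ẽ = 0` the number of projective (collinearity) classes of weight-`t`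
vectors of `ker(H)` gives `q^(m(n−1)) + (C(n,t)·(q−1)^(t−1) − 1)·q^(m(n−2))`:
the expected number of classes is `1 + (C(n,t)·(q−1)^(t−1) − 1)/q^m`. -/
theorem sum_projective_solutions_count
    (F : Type) [Field F] [Fintype F] [DecidableEq F]
    (q : ℕ) (hq : Fintype.card F = q)
    (m n t : ℕ) (hm : 1 ≤ m) (hn : 2 ≤ n) (ht1 : 1 ≤ t) (htn : t ≤ n)
    (et : Fin n → F)
    (het : (Finset.univ.filter (fun i => et i ≠ 0)).card = t) :
    ∑ H ∈ Finset.univ.filter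
        (fun H : Matrix (Fin m) (Fin n) F => H.mulVec et = 0),
      Set.ncard {O : Set (Fin n → F) |
        ∃ e : Fin n → F, H.mulVec e = 0 ∧
          (Finset.univ.filter (fun i => e i ≠ 0)).card = t ∧
          O = {x : Fin n → F | ∃ α : F, α ≠ 0 ∧ x = α • e}}
      = q ^ (m * (n - 1))
        + (Nat.choose n t * (q - 1) ^ (t - 1) - 1) * q ^ (m * (n - 2)) := by
  classical
  subst hq
  have hq2 : 2 ≤ Fintype.card F := Fintype.one_lt_card
  have het0 : et ≠ 0 := weight_pos_ne_zero et ht1 het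
  refine Nat.eq_of_mul_eq_mul_right (show 0 < Fintype.card F - 1 by omega) ?_
  rw [Finset.sum_mul]
  rw [Finset.sum_congr rfl (fun H _ => classes_count H ht1)]
  -- swap the double sum
  have hswap : ∑ H ∈ univ.filter (fun H : Matrix (Fin m) (Fin n) F => H.mulVec et = 0),
      (univ.filter (fun e : Fin n → F => H.mulVec e = 0 ∧
        (univ.filter (fun i => e i ≠ 0)).card = t)).card
      = ∑ e ∈ univ.filter
          (fun e : Fin n → F => (univ.filter (fun i => e i ≠ 0)).card = t),
        (univ.filter (fun H : Matrix (Fin m) (Fin n) F =>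
          H.mulVec et = 0 ∧ H.mulVec e = 0)).card := by
    rw [Finset.sum_congr rfl (fun H _ => Finset.card_filter _ _)]
    rw [Finset.sum_comm]
    conv_rhs => rw [Finset.sum_filter]
    refine Finset.sum_congr rfl (fun e _ => ?_)
    by_cases hwt : (univ.filter (fun i => e i ≠ 0)).card = t
    · rw [if_pos hwt]
      simp only [hwt, eq_self_iff_true, and_true]
      rw [← Finset.card_filter, Finset.filter_filter, Finset.card_filter]
    · rw [if_neg hwt]
      simp [hwt]
  rw [hswap]
  -- split according to collinearity with et
  rw [← Finset.sum_filter_add_sum_filter_not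
    (univ.filter (fun e : Fin n → F => (univ.filter (fun i => e i ≠ 0)).card = t))
    (fun e => ∃ α : F, α ≠ 0 ∧ e = α • et)]
  -- the collinear part
  have hW1 : (univ.filter (fun e : Fin n → F =>
        (univ.filter (fun i => e i ≠ 0)).card = t)).filter
        (fun e => ∃ α : F, α ≠ 0 ∧ e = α • et)
      = univ.filter (fun x : Fin n → F => ∃ α : F, α ≠ 0 ∧ x = α • et) := by
    ext e
    simp only [Finset.mem_filter, mem_univ, true_and]
    constructor
    · rintro ⟨-, h⟩; exact h
    · rintro ⟨α, hα, rfl⟩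
      exact ⟨by rw [weight_smul_eq et α hα]; exact het, ⟨α, hα, rfl⟩⟩
  have hcoll : ∀ e ∈ (univ.filter (fun e : Fin n → F =>
        (univ.filter (fun i => e i ≠ 0)).card = t)).filter
        (fun e => ∃ α : F, α ≠ 0 ∧ e = α • et),
      (univ.filter (fun H : Matrix (Fin m) (Fin n) F =>
        H.mulVec et = 0 ∧ H.mulVec e = 0)).card = Fintype.card F ^ (m * (n - 1)) := by
    intro e he
    rw [hW1, Finset.mem_filter] at he
    obtain ⟨-, α, hα, rfl⟩ := he
    have : (univ.filter (fun H : Matrix (Fin m) (Fin n) F =>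
        H.mulVec et = 0 ∧ H.mulVec (α • et) = 0))
        = univ.filter (fun H : Matrix (Fin m) (Fin n) F => H.mulVec et = 0) := by
      ext H
      simp only [Finset.mem_filter, mem_univ, true_and, and_iff_left_iff_imp]
      intro h
      rw [Matrix.mulVec_smul, h, smul_zero]
    rw [this, card_matrix_single et het0]
  have hncoll : ∀ e ∈ (univ.filter (fun e : Fin n → F =>
        (univ.filter (fun i => e i ≠ 0)).card = t)).filter
        (fun e => ¬ ∃ α : F, α ≠ 0 ∧ e = α • et),
      (univ.filter (fun H : Matrix (Fin m) (Fin n) F =>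
        H.mulVec et = 0 ∧ H.mulVec e = 0)).card = Fintype.card F ^ (m * (n - 2)) := by
    intro e he
    simp only [Finset.mem_filter, mem_univ, true_and] at he
    obtain ⟨hwt, hnc⟩ := he
    have he0 : e ≠ 0 := weight_pos_ne_zero e ht1 hwt
    refine card_matrix_pair et e (fun a b hab => ?_)
    by_cases hb : b = 0
    · subst hb
      rw [zero_smul, add_zero] at hab
      rcases smul_eq_zero.mp hab with ha | h
      · exact ⟨ha, rfl⟩
      · exact absurd h het0
    · exfalso
      have hee : e = (-(b⁻¹ * a)) • et := by
        have : b • e = -(a • et) := eq_neg_of_add_eq_zero_right hab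
        have := congrArg (fun x => b⁻¹ • x) this
        simp only [← mul_smul, inv_mul_cancel₀ hb, one_smul, smul_neg] at this
        rw [this, neg_smul, mul_smul]
      have hne : -(b⁻¹ * a) ≠ 0 := by
        intro h
        rw [h, zero_smul] at hee
        exact he0 hee
      exact hnc ⟨-(b⁻¹ * a), hne, hee⟩
  rw [Finset.sum_congr rfl hcoll, Finset.sum_congr rfl hncoll, Finset.sum_const,
    Finset.sum_const, smul_eq_mul, smul_eq_mul, hW1, orbit_card et het0]
  -- cardinality of the non-collinear part
  have hWcard := card_weight_sphere (F := F) (n := n) (t := t)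
  have hsplit := Finset.card_filter_add_card_filter_not
    (s := univ.filter (fun e : Fin n → F => (univ.filter (fun i => e i ≠ 0)).card = t))
    (p := fun e => ∃ α : F, α ≠ 0 ∧ e = α • et)
  rw [hW1, orbit_card et het0, hWcard] at hsplit
  -- final arithmetic
  have hkt : (Fintype.card F - 1) ^ t
      = (Fintype.card F - 1) ^ (t - 1) * (Fintype.card F - 1) := by
    conv_lhs => rw [← Nat.sub_add_cancel ht1]
    rw [pow_succ]
  rw [hkt, ← mul_assoc] at hsplit
  exact arith_final _ _ _ _ _
    (by
      have hC : 0 < n.choose t := Nat.choose_pos htn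
      have hK : 0 < (Fintype.card F - 1) ^ (t - 1) :=
        Nat.pow_pos (Nat.sub_pos_of_lt hq2)
      exact Nat.one_le_iff_ne_zero.mpr
        (Nat.mul_ne_zero (Nat.pos_iff_ne_zero.mp hC) (Nat.pos_iff_ne_zero.mp hK)))
    hsplit
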